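/- Let (G/K, Q) be as follows: 𝔭 = 𝔭₁ ⊕ ⋯ ⊕ 𝔭_n an orthogonal direct sum of real inner product spaces of dimensions d₁, …, d_n with respect to an inner product Q. Suppose h : [0,σ] → (0,∞) and f₁,…,f_n : [0,σ] → (0,∞) are smooth, and the metric has diagonal form with scalar second fundamental form data: given τ ∈ [0,σ], define δ_k = −f_k'(τ)/h(τ)·f_k(τ) [i.e., the second fundamental form of the slice r = τ with respect to the inward normal is Σ_k (−f_k(τ) f_k'(τ)/h(τ)) Q|_{𝔭_k}]. Then, assuming the tangential Ricci equations Σ-form and the rr-equation hold at r = τ with prescribed values φ_k(τ), the quantity Σ_{k=1}^n d_k( β_k/(2 f_k(τ)²) + Σ_{l,m} γ_{k,l}^m (f_k(τ)⁴ − 2 f_l(τ)⁴)/(4 f_k(τ)² f_l(τ)² f_m(τ)²) − Σ_l d_l δ_k δ_l/(f_k(τ)² f_l(τ)²)·f_k(τ) f_l(τ) + δ_k²/f_k(τ)² − φ_k(τ)/f_k(τ)² ) equals −1/h(τ)². In particular this quantity is strictly negative. -/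

import Mathlib

open Set

/-- `H₁(x,y) = 1 − Σ_k d_k( Σ_l d_l y_k y_l/(x_k x_l) − y_k²/x_k² )`. -/
noncomputable def H1 (n : ℕ) (d : Fin n → ℕ) (x y : Fin n → ℝ) : ℝ :=
  1 - ∑ k, (d k : ℝ) *
    ((∑ l, (d l : ℝ) * (y k * y l) / (x k * x l)) - (y k)^2 / (x k)^2)

/-- `H₂(x,z) = Σ_k d_k( z_k/x_k² − β_k/(2x_k²) − Σ_{l,m} γ_{k,l}^m (x_k⁴−2x_l⁴)/(4x_k²x_l²x_m²) )`. -/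
noncomputable def H2 (n : ℕ) (d : Fin n → ℕ) (β : Fin n → ℝ)
    (γ : Fin n → Fin n → Fin n → ℝ) (x z : Fin n → ℝ) : ℝ :=
  ∑ k, (d k : ℝ) *
    (z k / (x k)^2 - β k / (2 * (x k)^2) -
      ∑ l, ∑ m, γ k l m * ((x k)^4 - 2 * (x l)^4) /
        (4 * (x k)^2 * (x l)^2 * (x m)^2))

theorem stmt14 (n : ℕ) (hn : 1 ≤ n) (d : Fin n → ℕ) (hd : ∀ k, 0 < d k)
    (β : Fin n → ℝ) (γ : Fin n → Fin n → Fin n → ℝ)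
    (hβ : ∀ k, 0 ≤ β k) (hγ : ∀ k l m, 0 ≤ γ k l m)
    (σ : ℝ) (hσ : 0 < σ) (τ : ℝ) (hτ : τ ∈ Icc (0:ℝ) σ)
    (h : ℝ → ℝ) (f f' φ : Fin n → ℝ → ℝ)
    (hh : 0 < h τ) (hf : ∀ k, 0 < f k τ)
    (δ : Fin n → ℝ) (hδ : ∀ k, δ k = -(f' k τ) / h τ)
    -- the rr-equation combined with the tangential Ricci equations at `r = τ`:
    (hconstraint : H1 n d (fun k => f k τ) (fun k => f' k τ) =
      (h τ)^2 * H2 n d β γ (fun k => f k τ) (fun k => φ k τ)) :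
    (∑ k, (d k : ℝ) *
        (β k / (2 * (f k τ)^2) +
          (∑ l, ∑ m, γ k l m * ((f k τ)^4 - 2 * (f l τ)^4) /
            (4 * (f k τ)^2 * (f l τ)^2 * (f m τ)^2)) -
          (∑ l, (d l : ℝ) * (δ k * δ l) / ((f k τ)^2 * (f l τ)^2) * (f k τ * f l τ)) +
          (δ k)^2 / (f k τ)^2 - φ k τ / (f k τ)^2)) = -(1 / (h τ)^2) ∧
    (∑ k, (d k : ℝ) *
        (β k / (2 * (f k τ)^2) +
          (∑ l, ∑ m, γ k l m * ((f k τ)^4 - 2 * (f l τ)^4) /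
            (4 * (f k τ)^2 * (f l τ)^2 * (f m τ)^2)) -
          (∑ l, (d l : ℝ) * (δ k * δ l) / ((f k τ)^2 * (f l τ)^2) * (f k τ * f l τ)) +
          (δ k)^2 / (f k τ)^2 - φ k τ / (f k τ)^2)) < 0 := by
  have hh' : h τ ≠ 0 := hh.ne'
  have hx : ∀ k, f k τ ≠ 0 := fun k => (hf k).ne'
  have key : (∑ k, (d k : ℝ) *
        (β k / (2 * (f k τ)^2) +
          (∑ l, ∑ m, γ k l m * ((f k τ)^4 - 2 * (f l τ)^4) /
            (4 * (f k τ)^2 * (f l τ)^2 * (f m τ)^2)) -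
          (∑ l, (d l : ℝ) * (δ k * δ l) / ((f k τ)^2 * (f l τ)^2) * (f k τ * f l τ)) +
          (δ k)^2 / (f k τ)^2 - φ k τ / (f k τ)^2)) = -(1 / (h τ)^2) := by
    have hterm : ∀ k, (d k : ℝ) *
        (β k / (2 * (f k τ)^2) +
          (∑ l, ∑ m, γ k l m * ((f k τ)^4 - 2 * (f l τ)^4) /
            (4 * (f k τ)^2 * (f l τ)^2 * (f m τ)^2)) -
          (∑ l, (d l : ℝ) * (δ k * δ l) / ((f k τ)^2 * (f l τ)^2) * (f k τ * f l τ)) +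
          (δ k)^2 / (f k τ)^2 - φ k τ / (f k τ)^2)
        = -(1 / (h τ)^2) * ((d k : ℝ) *
            ((∑ l, (d l : ℝ) * (f' k τ * f' l τ) / (f k τ * f l τ)) - (f' k τ)^2 / (f k τ)^2))
          - (d k : ℝ) * (φ k τ / (f k τ)^2 - β k / (2 * (f k τ)^2) -
            ∑ l, ∑ m, γ k l m * ((f k τ)^4 - 2 * (f l τ)^4) /
              (4 * (f k τ)^2 * (f l τ)^2 * (f m τ)^2)) := by
      intro k
      have hin : (∑ l, (d l : ℝ) * (δ k * δ l) / ((f k τ)^2 * (f l τ)^2) * (f k τ * f l τ))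
          = (1 / (h τ)^2) * ∑ l, (d l : ℝ) * (f' k τ * f' l τ) / (f k τ * f l τ) := by
        rw [Finset.mul_sum]
        refine Finset.sum_congr rfl fun l _ => ?_
        rw [hδ k, hδ l]
        field_simp [hx k, hx l]
      have hδ2 : (δ k)^2 / (f k τ)^2 = (1 / (h τ)^2) * ((f' k τ)^2 / (f k τ)^2) := by
        rw [hδ k]; field_simp [hx k]
      rw [hin, hδ2]; ring
    rw [Finset.sum_congr rfl fun k _ => hterm k, Finset.sum_sub_distrib, ← Finset.mul_sum]
    have h1 : (∑ k, (d k : ℝ) *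
        ((∑ l, (d l : ℝ) * (f' k τ * f' l τ) / (f k τ * f l τ)) - (f' k τ)^2 / (f k τ)^2))
        = 1 - H1 n d (fun k => f k τ) (fun k => f' k τ) := by
      simp [H1]
    rw [h1, hconstraint]
    have h2 : (∑ k, (d k : ℝ) * (φ k τ / (f k τ)^2 - β k / (2 * (f k τ)^2) -
        ∑ l, ∑ m, γ k l m * ((f k τ)^4 - 2 * (f l τ)^4) /
          (4 * (f k τ)^2 * (f l τ)^2 * (f m τ)^2)))
        = H2 n d β γ (fun k => f k τ) (fun k => φ k τ) := by
      simp [H2]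
    rw [h2]
    field_simp
    ring
  refine ⟨key, key ▸ ?_⟩
  have : 0 < 1 / (h τ)^2 := by positivity
  linarith
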